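/- Let h be a flat Riemannian metric on the two-torus 𝕋² with diameter Γ ≤ 1, let I ⊂ ℝ be a compact interval with |I| ≥ 1, let X = 𝕋²×I carry the distance d_X induced by the flat product Riemannian metric g = dx² + h, and let Y = (I,|·|) with the standard distance. Then dist_GH(X,Y) ≥ Γ/5. -/
import Mathlib


noncomputable section

open Metric Set Filter Topology
open scoped ENNReal NNReal

/-! ### Basic model spaces -/

/-- Euclidean three-space. -/
abbrev R3 := EuclideanSpace ℝ (Fin 3)
/-- Euclidean two-space. -/
abbrev R2 := EuclideanSpace ℝ (Fin 2)
/-- The two-torus `𝕋² = 𝕊¹ × 𝕊¹`. -/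
abbrev Torus2 := Circle × Circle
/-- The closed unit two-disc. -/
abbrev Disc2 := {z : ℂ // ‖z‖ ≤ 1}
/-- The (closed) solid torus `B̄² × 𝕊¹`. -/
abbrev SolidTorusT := Disc2 × Circle
/-- The closed unit three-ball. -/
abbrev Ball3 := {x : R3 // ‖x‖ ≤ 1}
/-- The unit two-sphere. -/
abbrev Sphere2 := {x : R3 // ‖x‖ = 1}

/-! ### Abstract Riemannian data

Mathlib has no Ricci curvature or Riemannian volume, so we record abstractly,
for a Riemannian metric `g` on `M`: the induced length distance `d`, the
Riemannian volume `vol` of subsets, and at each point the smallest and largest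
eigenvalues `ricciLo`, `ricciHi` of the Ricci tensor (w.r.t. `g`). -/
structure RiemData (M : Type*) where
  d : M → M → ℝ
  d_self : ∀ p, d p p = 0
  d_comm : ∀ p q, d p q = d q p
  d_triangle : ∀ p q r, d p r ≤ d p q + d q r
  d_eq_zero : ∀ p q, d p q = 0 → p = q
  vol : Set M → ℝ
  vol_nonneg : ∀ s, 0 ≤ vol s
  vol_mono : ∀ s t, s ⊆ t → vol s ≤ vol t
  ricciLo : M → ℝ
  ricciHi : M → ℝ
  lo_le_hi : ∀ p, ricciLo p ≤ ricciHi p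

namespace RiemData

variable {M : Type*} (g : RiemData M)

/-- Geodesic ball of the metric. -/
def ball (o : M) (r : ℝ) : Set M := {p | g.d o p < r}

/-- Open geodesic annulus `A_g(a,b) = B_g(o,b) ∖ closure (B_g(o,a))`. -/
def ann (o : M) (a b : ℝ) : Set M := {p | a < g.d o p ∧ g.d o p < b}

/-- Metric completeness of the distance `d` (every Cauchy sequence converges). -/
def Complete : Prop :=
  ∀ s : ℕ → M, (∀ ε > 0, ∃ N, ∀ m ≥ N, ∀ n ≥ N, g.d (s m) (s n) < ε) →
    ∃ p, ∀ ε > 0, ∃ N, ∀ n ≥ N, g.d (s n) p < ε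

/-- `d` is a length (intrinsic) distance: approximate midpoints exist. -/
def LengthDist : Prop :=
  ∀ p q, ∀ ε > 0, ∃ m, g.d p m ≤ g.d p q / 2 + ε ∧ g.d m q ≤ g.d p q / 2 + ε

end RiemData

/-- For a Riemannian metric on `ℝ³`: the topology induced by the Riemannian
distance is the standard topology of `ℝ³`. -/
def RiemData.Compatible (g : RiemData R3) : Prop :=
  (∀ p : R3, ∀ ε > 0, ∃ δ > 0, ∀ q, ‖q - p‖ < δ → g.d p q < ε) ∧
  (∀ p : R3, ∀ ε > 0, ∃ δ > 0, ∀ q, g.d p q < δ → ‖q - p‖ < ε)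

/-! ### Gromov–Hausdorff distance, following the definition in the paper:
metrics on the disjoint union extending both metrics, with each space in the
`δ`-neighbourhood of the other. -/

/-- There is a metric on `X ⊔ Y` extending the two distances for which `X` and
`Y` are mutually within (closed) distance `δ`; `dist_GH (X,Y) ≤ δ'` for every
`δ' > δ`. -/
def IsGHApprox (X : Type*) (Y : Type*) [PseudoMetricSpace X] [PseudoMetricSpace Y]
    (δ : ℝ) : Prop :=
  ∃ D : (X ⊕ Y) → (X ⊕ Y) → ℝ,
    (∀ a, D a a = 0) ∧ (∀ a b, 0 ≤ D a b) ∧ (∀ a b, D a b = D b a) ∧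
    (∀ a b c, D a c ≤ D a b + D b c) ∧
    (∀ x x' : X, D (.inl x) (.inl x') = dist x x') ∧
    (∀ y y' : Y, D (.inr y) (.inr y') = dist y y') ∧
    (∀ x : X, ∃ y : Y, D (.inl x) (.inr y) ≤ δ) ∧
    (∀ y : Y, ∃ x : X, D (.inl x) (.inr y) ≤ δ)

/-- The Gromov–Hausdorff distance between `X` and `Y` is at most `c`. -/
def GHDistLE (X : Type*) (Y : Type*) [PseudoMetricSpace X] [PseudoMetricSpace Y]
    (c : ℝ) : Prop :=
  ∀ δ, c < δ → IsGHApprox X Y δ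

/-- The Gromov–Hausdorff distance between `X` and `Y` is at least `c`. -/
def GHDistGE (X : Type*) (Y : Type*) [PseudoMetricSpace X] [PseudoMetricSpace Y]
    (c : ℝ) : Prop :=
  ∀ δ, IsGHApprox X Y δ → c ≤ δ

/-- A compact interval `[0,l]` of the real line with the standard distance. -/
abbrev IccSp (l : ℝ) := Set.Icc (0:ℝ) l

/-! ### Intrinsic distance, radius, curve lengths -/

/-- Length of a path, as the total variation of the parametrization. -/
def pathLength {X : Type*} [PseudoMetricSpace X] {p q : X} (γ : Path p q) : ℝ≥0∞ :=
  eVariationOn γ Set.univ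

/-- Intrinsic (inner) distance of the region `Ω ⊆ X`: infimum of lengths of
paths joining `p` to `q` inside `Ω`. -/
def intrinsicDist {X : Type*} [MetricSpace X] (Ω : Set X) (p q : X) : ℝ≥0∞ :=
  ⨅ (γ : Path p q) (_ : Set.range γ ⊆ Ω), pathLength γ

/-- The radius (to the boundary) `rad(Ω) = sup_{p ∈ Ω} d^Ω(p, ∂Ω)`. -/
def radius {X : Type*} [MetricSpace X] (Ω : Set X) : ℝ≥0∞ :=
  ⨆ (p : X) (_ : p ∈ Ω), ⨅ (q : X) (_ : q ∈ frontier Ω), intrinsicDist Ω p q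

/-! ### Flat tori -/

/-- `T` is (isometric to) a flat two-torus: a quotient of Euclidean `ℝ²` by a
lattice spanned by two independent vectors, with the quotient distance. -/
def IsFlatTorus (T : Type*) [MetricSpace T] : Prop :=
  ∃ v₁ v₂ : R2, LinearIndependent ℝ ![v₁, v₂] ∧
    ∃ π : R2 → T, Function.Surjective π ∧
      ∀ x y : R2, dist (π x) (π y) =
        Metric.infDist (x - y) ((AddSubgroup.closure {v₁, v₂} : AddSubgroup R2) : Set R2)

/-! ### Manifolds with (non-necessarily smooth) boundary, as metric spaces

An abstract compact Riemannian three-manifold with non-necessarily smooth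
boundary is recorded as a metric space (the distance `d^M_g`), a distinguished
boundary set, the total Riemannian volume, and pointwise Ricci eigenvalue
bounds. -/
structure RMB where
  X : Type
  [ms : MetricSpace X]
  bdry : Set X
  vol : ℝ
  ricciLo : X → ℝ
  ricciHi : X → ℝ

attribute [instance] RMB.ms

namespace RMB

variable (M : RMB)

/-- The manifold interior `M° = M ∖ ∂M`. -/
def interiorPts : Set M.X := M.bdryᶜ

/-- The tubular neighbourhood `𝒯_d(∂M, ε)` of the boundary. -/
def tnb (ε : ℝ) : Set M.X := {p | Metric.infDist p M.bdry < ε}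

/-- `|Ric| ≤ Λ` everywhere. -/
def RicBddBy (Λ : ℝ) : Prop := ∀ p : M.X, -Λ ≤ M.ricciLo p ∧ M.ricciHi p ≤ Λ

end RMB

/-- Membership in the class `ℳ(𝔑₀)`: for all `1 > ε₀ > 2ε₁ > 0`, the set
`M ∖ 𝒯(∂M,ε₀)` can be covered by at most `𝔑₀(ε₀,ε₁)` geodesic balls of radius
`ε₁` (balls centred at points at distance `> ε₁` from the boundary). -/
def InClassM (N : ℝ → ℝ → ℝ) (M : RMB) : Prop :=
  ∀ ε₀ ε₁ : ℝ, ε₀ < 1 → 2 * ε₁ < ε₀ → 0 < ε₁ →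
    ∃ s : Finset M.X, (s.card : ℝ) ≤ N ε₀ ε₁ ∧
      (∀ c ∈ s, ε₁ < Metric.infDist c M.bdry) ∧
      ((Set.univ : Set M.X) \ M.tnb ε₀) ⊆ ⋃ c ∈ s, Metric.ball c ε₁

/-- The class `ℳ(𝔑₀,Λ₀)`. -/
def InClassML (N : ℝ → ℝ → ℝ) (Λ : ℝ) (M : RMB) : Prop :=
  InClassM N M ∧ M.RicBddBy Λ

/-- An `(ε̲,ε̄)`-connected component of `M`: a compact connected region with
boundary contained in `𝒯(∂M,ε̄) ∖ closure (𝒯(∂M,ε̲))`. -/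
def IsEpsComponent (M : RMB) (e1 e2 : ℝ) (Ω : Set M.X) : Prop :=
  IsCompact Ω ∧ IsConnected Ω ∧
    frontier Ω ⊆ M.tnb e2 \ closure (M.tnb e1)

/-- A sequence of (pseudo)metric spaces indexed by `ℕ` converges in the
Gromov–Hausdorff topology to `X`. -/
def GHConv (S : ℕ → Type*) [∀ i, PseudoMetricSpace (S i)]
    (X : Type*) [PseudoMetricSpace X] : Prop :=
  ∀ ε : ℝ, 0 < ε → ∃ N, ∀ i ≥ N, IsGHApprox (S i) X ε



/-- Auxiliary chain lemma: a property stable under small steps propagates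
along an interval. -/
private lemma chain_ge (a b s C : ℝ) (hs : 0 < s) (hab : a ≤ b) (ψ : ℝ → ℝ)
    (hstep : ∀ t, t ∈ Set.Icc a b → ∀ t', t' ∈ Set.Icc a b → |t' - t| ≤ s →
      C ≤ ψ t → C ≤ ψ t')
    (h : C ≤ ψ a) : C ≤ ψ b := by
  have hmem : ∀ i : ℕ, min (a + i * s) b ∈ Set.Icc a b := by
    intro i
    refine ⟨le_min ?_ hab, min_le_right _ _⟩
    nlinarith [Nat.cast_nonneg (α := ℝ) i]
  have key : ∀ i : ℕ, C ≤ ψ (min (a + i * s) b) := by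
    intro i
    induction i with
    | zero => simpa [min_eq_left hab] using h
    | succ n ih =>
      refine hstep _ (hmem n) _ (hmem (n+1)) ?_ ih
      rw [abs_le]
      constructor
      · have h1 : min (a + (n:ℕ) * s) b ≤ min (a + ((n:ℕ)+1) * s) b := by
          apply min_le_min _ le_rfl
          nlinarith
        push_cast
        linarith
      · have h2 : min (a + ((n:ℕ)+1) * s) b ≤ min (a + (n:ℕ) * s) b + s := by
          have : min (a + (n:ℕ) * s) b + s = min (a + (n:ℕ)*s + s) (b + s) := by
            rw [min_add_add_right]
          rw [this]
          apply min_le_min (by nlinarith) (by linarith)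
        push_cast
        linarith
  have hceil : (b - a) / s ≤ (⌈(b - a) / s⌉₊ : ℝ) := Nat.le_ceil _
  have hb : b ≤ a + (⌈(b - a) / s⌉₊ : ℝ) * s := by
    rw [div_le_iff₀ hs] at hceil
    linarith
  have := key ⌈(b - a) / s⌉₊
  rwa [min_eq_right hb] at this

/-- Let `h` be a flat metric on `𝕋²` of diameter `Γ ≤ 1`,
`I = [a,b]` a compact interval with `|I| ≥ 1`, and let `X = 𝕋² × I` carry the
distance induced by the flat product metric `g = dx² + h`.  Then
`dist_GH(X, I) ≥ Γ/5`. -/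
theorem ghDist_flat_torus_cylinder_to_interval_ge
    (T : Type) [MetricSpace T] [CompactSpace T] [Nonempty T]
    (hT : IsFlatTorus T)
    (Γ : ℝ) (hdiam : Metric.diam (Set.univ : Set T) = Γ) (hΓ : Γ ≤ 1)
    (a b : ℝ) (hab : 1 ≤ b - a)
    (X : Type) [MetricSpace X] (e : X ≃ T × (Set.Icc a b))
    (hX : ∀ p q : X, dist p q =
      Real.sqrt (dist (e p).1 (e q).1 ^ 2 +
        |((e p).2 : ℝ) - ((e q).2 : ℝ)| ^ 2)) :
    GHDistGE X (Set.Icc a b) (Γ / 5) := by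
  intro δ hδ
  by_contra hcon
  push_neg at hcon
  obtain ⟨D, hD0, hDnn, hDsym, hDtri, hDX, hDY, hXY, hYX⟩ := hδ
  have hΓ0 : 0 ≤ Γ := hdiam ▸ Metric.diam_nonneg
  have hab' : a ≤ b := by linarith
  have haI : a ∈ Set.Icc a b := ⟨le_rfl, hab'⟩
  have hbI : b ∈ Set.Icc a b := ⟨hab', le_rfl⟩
  obtain ⟨y0, hy0⟩ := hXY (e.symm (Classical.arbitrary T, ⟨a, haI⟩))
  have hδ0 : 0 ≤ δ := le_trans (hDnn _ _) hy0
  have hΓ5 : 5 * δ < Γ := by linarith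
  -- diameter attained
  obtain ⟨z, -, hz⟩ := isCompact_univ.exists_isMaxOn
    (Set.univ_nonempty (α := T × T)) continuous_dist.continuousOn
  have hpq : dist z.1 z.2 = Γ := by
    apply le_antisymm
    · rw [← hdiam]
      exact Metric.dist_le_diam_of_mem isCompact_univ.isBounded trivial trivial
    · rw [← hdiam]
      apply Metric.diam_le_of_forall_dist_le dist_nonneg
      intro x hx y hy
      exact hz (Set.mem_univ (x, y))
  set p := z.1
  set q := z.2
  -- choose the approximation map
  choose F hF using hXY
  have hFd : ∀ x x' : X, dist x x' - 2*δ ≤ |(F x : ℝ) - (F x' : ℝ)| ∧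
      |(F x : ℝ) - (F x' : ℝ)| ≤ dist x x' + 2*δ := by
    intro x x'
    have hyy : dist (F x) (F x') = |(F x : ℝ) - (F x' : ℝ)| := by
      rw [Subtype.dist_eq, Real.dist_eq]
    have h1 : D (.inr (F x)) (.inr (F x')) = dist (F x) (F x') := hDY _ _
    have h2 : D (.inl x) (.inl x') = dist x x' := hDX _ _
    have t1 : D (.inl x) (.inl x') ≤
        D (.inl x) (.inr (F x)) + D (.inr (F x)) (.inl x') := hDtri _ _ _
    have t2 : D (.inr (F x)) (.inl x') ≤
        D (.inr (F x)) (.inr (F x')) + D (.inr (F x')) (.inl x') := hDtri _ _ _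
    have t3 : D (.inr (F x)) (.inr (F x')) ≤
        D (.inr (F x)) (.inl x) + D (.inl x) (.inr (F x')) := hDtri _ _ _
    have t4 : D (.inl x) (.inr (F x')) ≤
        D (.inl x) (.inl x') + D (.inl x') (.inr (F x')) := hDtri _ _ _
    have s1 : D (.inr (F x)) (.inl x) = D (.inl x) (.inr (F x)) := hDsym _ _
    have s2 : D (.inr (F x')) (.inl x') = D (.inl x') (.inr (F x')) := hDsym _ _
    have hx := hF x
    have hx' := hF x'
    exact ⟨by linarith, by linarith⟩
  -- distance formulas in X
  have hdXf : ∀ (u v : T) (t t' : Set.Icc a b),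
      dist (e.symm (u, t)) (e.symm (v, t')) =
        Real.sqrt (dist u v ^ 2 + |((t:ℝ)) - ((t':ℝ))| ^ 2) := by
    intro u v t t'
    rw [hX]
    simp
  have hdP : ∀ (u : T) (t t' : Set.Icc a b),
      dist (e.symm (u, t)) (e.symm (u, t')) = |((t:ℝ)) - ((t':ℝ))| := by
    intro u t t'
    rw [hdXf, dist_self]
    rw [show (0:ℝ)^2 + |((t:ℝ)) - ((t':ℝ))|^2 = |((t:ℝ)) - ((t':ℝ))|^2 by ring,
      Real.sqrt_sq (abs_nonneg _)]
  have hdQ : ∀ t : Set.Icc a b,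
      dist (e.symm (q, t)) (e.symm (p, t)) = Γ := by
    intro t
    rw [hdXf, sub_self, abs_zero]
    rw [show dist q p ^ 2 + (0:ℝ)^2 = dist q p ^ 2 by ring,
      Real.sqrt_sq dist_nonneg, dist_comm, hpq]
  -- the column maps
  set f : Set.Icc a b → ℝ := fun t => (F (e.symm (p, t)) : ℝ) with hf_def
  set g : Set.Icc a b → ℝ := fun t => (F (e.symm (q, t)) : ℝ) with hg_def
  set φ : ℝ → ℝ := fun t =>
    if h : t ∈ Set.Icc a b then g ⟨t, h⟩ - f ⟨t, h⟩ else 0 with hφ_def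
  have hφval : ∀ t (h : t ∈ Set.Icc a b), φ t = g ⟨t, h⟩ - f ⟨t, h⟩ := by
    intro t h
    simp only [hφ_def]
    exact dif_pos h
  have hfmem : ∀ t : Set.Icc a b, f t ∈ Set.Icc a b := fun t => (F _).2
  have hgmem : ∀ t : Set.Icc a b, g t ∈ Set.Icc a b := fun t => (F _).2
  -- |φ| is large
  have habs : ∀ t (h : t ∈ Set.Icc a b), Γ - 2*δ ≤ |φ t| := by
    intro t h
    rw [hφval t h]
    have hlow := (hFd (e.symm (q, ⟨t, h⟩)) (e.symm (p, ⟨t, h⟩))).1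
    rw [hdQ] at hlow
    exact hlow
  -- Lipschitz-type bounds on f and g
  have hflip : ∀ (t t' : Set.Icc a b),
      (b:ℝ) - (b:ℝ) ≤ 0 := by intro t t'; linarith
  have hfL : ∀ t t' : Set.Icc a b,
      |f t' - f t| ≤ |((t':ℝ)) - ((t:ℝ))| + 2*δ := by
    intro t t'
    have := (hFd (e.symm (p, t')) (e.symm (p, t))).2
    rwa [hdP] at this
  have hgL : ∀ t t' : Set.Icc a b,
      |g t' - g t| ≤ |((t':ℝ)) - ((t:ℝ))| + 2*δ := by
    intro t t'
    have := (hFd (e.symm (q, t')) (e.symm (q, t))).2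
    rwa [hdP] at this
  -- the step size
  set s : ℝ := (Γ - 4*δ)/2 with hs_def
  have hs : 0 < s := by rw [hs_def]; linarith
  -- step property for φ and -φ
  have hstepcore : ∀ t, t ∈ Set.Icc a b → ∀ t', t' ∈ Set.Icc a b → |t' - t| ≤ s →
      ∀ c : ℝ, (c = 1 ∨ c = -1) → Γ - 2*δ ≤ c * φ t → Γ - 2*δ ≤ c * φ t' := by
    intro t ht t' ht' hd c hc hφt
    have hfb := hfL ⟨t, ht⟩ ⟨t', ht'⟩
    have hgb := hgL ⟨t, ht⟩ ⟨t', ht'⟩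
    have hdiff : |φ t' - φ t| ≤ 2*|t' - t| + 4*δ := by
      rw [hφval t ht, hφval t' ht']
      have hf1 := abs_le.mp hfb
      have hg1 := abs_le.mp hgb
      rw [abs_le]
      constructor <;> [skip; skip] <;>
        · obtain ⟨hf1a, hf1b⟩ := hf1
          obtain ⟨hg1a, hg1b⟩ := hg1
          have := abs_nonneg ((t':ℝ) - (t:ℝ))
          cases abs_cases ((t':ℝ) - (t:ℝ)) with
          | inl h => rw [h.1] at hf1a hf1b hg1a hg1b ⊢; linarith
          | inr h => rw [h.1] at hf1a hf1b hg1a hg1b ⊢; linarith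
    have habs' := habs t' ht'
    have hd1 := abs_le.mp hdiff
    rcases le_abs.mp habs' with h1 | h1 <;> rcases hc with rfl | rfl <;>
      simp only [one_mul, neg_one_mul, neg_neg] at hφt ⊢ <;> linarith
  -- endpoints
  set ta : Set.Icc a b := ⟨a, haI⟩
  set tb : Set.Icc a b := ⟨b, hbI⟩
  have horient : b - a - 2*δ ≤ |f tb - f ta| := by
    have := (hFd (e.symm (p, tb)) (e.symm (p, ta))).1
    rw [hdP] at this
    rw [abs_of_nonneg (by linarith : (0:ℝ) ≤ (b:ℝ) - a)] at this
    exact this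
  have hfa := hfmem ta
  have hfb := hfmem tb
  have hga := hgmem ta
  have hgb := hgmem tb
  have hφa := habs a haI
  have hchain : ∀ c : ℝ, (c = 1 ∨ c = -1) →
      Γ - 2*δ ≤ c * φ a → Γ - 2*δ ≤ c * φ b := by
    intro c hc h
    exact chain_ge a b s (Γ - 2*δ) hs hab' (fun t => c * φ t)
      (fun t ht t' ht' hst => hstepcore t ht t' ht' hst c hc) h
  have hφaval : φ a = g ta - f ta := hφval a haI
  have hφbval : φ b = g tb - f tb := hφval b hbI
  rcases le_abs.mp horient with hor | hor
  · -- f increasing-type: f tb ≥ b - 2δ, f ta ≤ a + 2δ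
    have hfb2 : b - 2*δ ≤ f tb := by
      have := hfa.1
      linarith
    have hfa2 : f ta ≤ a + 2*δ := by
      have := hfb.2
      linarith
    rcases le_abs.mp hφa with h1 | h1
    · have hb := hchain 1 (Or.inl rfl) (by simpa using h1)
      rw [one_mul, hφbval] at hb
      have := hgb.2
      linarith
    · rw [hφaval] at h1
      have := hga.1
      linarith
  · -- f decreasing-type: f ta ≥ b - 2δ, f tb ≤ a + 2δ
    have hfa2 : b - 2*δ ≤ f ta := by
      have := hfb.1
      linarith
    have hfb2 : f tb ≤ a + 2*δ := by
      have := hfa.2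
      linarith
    rcases le_abs.mp hφa with h1 | h1
    · rw [hφaval] at h1
      have := hga.2
      linarith
    · have hb := hchain (-1) (Or.inr rfl) (by rw [neg_one_mul]; exact h1)
      rw [neg_one_mul, hφbval] at hb
      have := hgb.1
      linarith
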